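/- Assume I₀ ≠ ∅ and let Z ∈ X. Then there exist real numbers φ₁ ≤ φ₂ with φ₂ − φ₁ < 1 such that the image of the imaginary cone under the ℝ-linear extension of Z is exactly Z(I₀) = {r e^{iπφ} ∈ ℂ : r > 0 and φ₁ ≤ φ ≤ φ₂}. -/

import Mathlib

open scoped BigOperators

noncomputable section

namespace KacMoodyStab

variable {ι : Type*} [Fintype ι] [DecidableEq ι]

/-- A symmetric generalized Cartan matrix: symmetric, `2` on the diagonal,
non-positive integers off the diagonal. -/
def IsGCM (A : Matrix ι ι ℤ) : Prop :=
  A.IsSymm ∧ (∀ i, A i i = 2) ∧ ∀ i j, i ≠ j → A i j ≤ 0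

/-- The simple root `α i` in the root lattice `L = ι → ℤ`. -/
def sroot (i : ι) : ι → ℤ := Pi.single i 1

/-- The symmetric bilinear form `(x, y) = ∑ i j, x i * A i j * y j` on the root lattice. -/
def bform (A : Matrix ι ι ℤ) (x y : ι → ℤ) : ℤ := ∑ i, ∑ j, x i * A i j * y j

/-- The linear functional `λ ↦ (λ, α i)`. -/
def corootFn (A : Matrix ι ι ℤ) (i : ι) : (ι → ℤ) →ₗ[ℤ] ℤ where
  toFun x := ∑ j, x j * A j i
  map_add' x y := by simp [add_mul, Finset.sum_add_distrib]
  map_smul' c x := by simp [Finset.mul_sum, mul_assoc]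

lemma corootFn_sroot (A : Matrix ι ι ℤ) (hA : IsGCM A) (i : ι) :
    corootFn A i (sroot i) = 2 := by
  have h : ∀ j, (sroot i) j * A j i = if j = i then A j i else 0 := by
    intro j
    by_cases h : j = i <;> simp [sroot, Pi.single_apply, h]
  have : corootFn A i (sroot i) = ∑ j, (sroot i) j * A j i := rfl
  rw [this]
  simp [h, hA.2.1 i]

/-- The simple reflection `r i : λ ↦ λ - (λ, α i) α i` as a `ℤ`-linear automorphism
of the root lattice. -/
def srefl (A : Matrix ι ι ℤ) (hA : IsGCM A) (i : ι) : (ι → ℤ) ≃ₗ[ℤ] (ι → ℤ) :=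
  Module.reflection (corootFn_sroot A hA i)

/-- The Weyl group, the subgroup of automorphisms of the root lattice generated by the
simple reflections. -/
def weylGroup (A : Matrix ι ι ℤ) (hA : IsGCM A) : Subgroup ((ι → ℤ) ≃ₗ[ℤ] (ι → ℤ)) :=
  Subgroup.closure (Set.range (srefl A hA))

/-- The set of real roots: the orbit of the simple roots under the Weyl group. -/
def realRoots (A : Matrix ι ι ℤ) (hA : IsGCM A) : Set (ι → ℤ) :=
  {α | ∃ w ∈ weylGroup A hA, ∃ i, α = w (sroot i)}

/-- The set of positive real roots. -/
def posRealRoots (A : Matrix ι ι ℤ) (hA : IsGCM A) : Set (ι → ℤ) :=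
  realRoots A hA ∩ {α | ∀ i, 0 ≤ α i}

/-- The Dynkin diagram of a (symmetric) GCM: distinct `i`, `j` are adjacent
iff `A i j < 0`. -/
def dynkin (A : Matrix ι ι ℤ) : SimpleGraph ι where
  Adj i j := i ≠ j ∧ (A i j < 0 ∨ A j i < 0)
  symm := ⟨fun i j h => ⟨h.1.symm, h.2.symm⟩⟩
  loopless := ⟨fun i h => h.1 rfl⟩

/-- The fundamental set `K` of positive imaginary roots: non-zero, non-negative,
connected support, and `(α, α i) ≤ 0` for all `i`. -/
def fundamentalSet (A : Matrix ι ι ℤ) : Set (ι → ℤ) :=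
  {α | (∀ i, 0 ≤ α i) ∧ α ≠ 0 ∧
    ((dynkin A).induce {i | α i ≠ 0}).Connected ∧
    ∀ i, bform A α (sroot i) ≤ 0}

/-- The set of positive imaginary roots: the orbit of the fundamental set under the
Weyl group. -/
def posImRoots (A : Matrix ι ι ℤ) (hA : IsGCM A) : Set (ι → ℤ) :=
  {β | ∃ w ∈ weylGroup A hA, ∃ α ∈ fundamentalSet A, β = w α}

/-- The set of all roots `Δ = Δ^re ∪ Δ^im`. -/
def allRoots (A : Matrix ι ι ℤ) (hA : IsGCM A) : Set (ι → ℤ) :=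
  realRoots A hA ∪ (posImRoots A hA ∪ {α | -α ∈ posImRoots A hA})

/-- The canonical embedding of the root lattice into `V*_ℝ = L ⊗ ℝ = ι → ℝ`. -/
def castR (α : ι → ℤ) : ι → ℝ := fun i => (α i : ℝ)

/-- The imaginary cone: the closure of the convex hull of `Δ^im_+ ∪ {0}` in `V*_ℝ`. -/
def imCone (A : Matrix ι ι ℤ) (hA : IsGCM A) : Set (ι → ℝ) :=
  closure (convexHull ℝ (insert 0 (castR '' posImRoots A hA)))

/-- The pairing of `Z ∈ V = Hom_ℤ(L, ℂ)` (recorded by its values `Z i = Z(α i)`)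
with an element of `V*_ℝ`, via the `ℝ`-linear extension of `Z`. -/
def pairC (Z : ι → ℂ) (l : ι → ℝ) : ℂ := ∑ i, Z i * (l i : ℂ)

/-- The pairing of `Z ∈ V = Hom_ℤ(L, ℂ)` with an element of the root lattice. -/
def pairCZ (Z : ι → ℂ) (α : ι → ℤ) : ℂ := ∑ i, Z i * (α i : ℂ)

/-- The pairing of `Z ∈ V_ℝ = Hom_ℤ(L, ℝ)` with an element of `V*_ℝ`. -/
def pairR (Z : ι → ℝ) (l : ι → ℝ) : ℝ := ∑ i, Z i * l i

/-- The set `X = V \ ∪_{λ ∈ I₀} H_λ`. -/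
def Xset (A : Matrix ι ι ℤ) (hA : IsGCM A) : Set (ι → ℂ) :=
  {Z | ∀ l ∈ imCone A hA \ {0}, pairC Z l ≠ 0}

/-- The regular subset `Xreg = X \ ∪_{α ∈ Δ^re_+} H_α`. -/
def Xreg (A : Matrix ι ι ℤ) (hA : IsGCM A) : Set (ι → ℂ) :=
  Xset A hA ∩ {Z | ∀ α ∈ posRealRoots A hA, pairCZ Z α ≠ 0}

/-- The sector `{r e^{iπφ} : r > 0, φ₁ ≤ φ ≤ φ₂}` in `ℂ`. -/
def sector (φ₁ φ₂ : ℝ) : Set ℂ :=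
  {z | ∃ r : ℝ, 0 < r ∧ ∃ φ : ℝ, φ₁ ≤ φ ∧ φ ≤ φ₂ ∧
    z = (r : ℂ) * Complex.exp (Real.pi * φ * Complex.I)}

/-- The contragredient action of a lattice automorphism `w` on `V = Hom_ℤ(L, ℂ)`:
`(w·Z)(α i) = Z(w⁻¹ α i)`. -/
def actC (w : (ι → ℤ) ≃ₗ[ℤ] (ι → ℤ)) (Z : ι → ℂ) : ι → ℂ :=
  fun i => ∑ j, Z j * ((w.symm (sroot i)) j : ℂ)

/-- The contragredient action of a lattice automorphism `w` on `V_ℝ = Hom_ℤ(L, ℝ)`: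
`(w·Z)(α i) = Z(w⁻¹ α i)`. -/
def actR (w : (ι → ℤ) ≃ₗ[ℤ] (ι → ℤ)) (Z : ι → ℝ) : ι → ℝ :=
  fun i => ∑ j, Z j * ((w.symm (sroot i)) j : ℝ)

/-- The `ℝ`-linear extension of a lattice automorphism `w` to `V*_ℝ = L ⊗ ℝ`. -/
def extR (w : (ι → ℤ) ≃ₗ[ℤ] (ι → ℤ)) (l : ι → ℝ) : ι → ℝ :=
  fun i => ∑ j, ((w (sroot j)) i : ℝ) * l j

/-- Finite type for a GCM (Kac's condition (Fin)). -/
def IsFiniteType (A : Matrix ι ι ℤ) : Prop :=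
  A.det ≠ 0 ∧
  (∃ u : ι → ℝ, (∀ i, 0 < u i) ∧ ∀ i, 0 < (A.map (Int.cast : ℤ → ℝ)).mulVec u i) ∧
  ∀ u : ι → ℝ, (∀ i, 0 ≤ (A.map (Int.cast : ℤ → ℝ)).mulVec u i) →
    (∀ i, 0 < u i) ∨ u = 0

/-- The (open) Weyl chamber `C_ℝ` in `V_ℝ`. -/
def weylChamber : Set (ι → ℝ) := {Z | ∀ i, 0 < Z i}

/-- The closed Weyl chamber in `V_ℝ`. -/
def weylChamberCl : Set (ι → ℝ) := {Z | ∀ i, 0 ≤ Z i}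

/-- The Tits cone `T_ℝ = ∪_{w ∈ W} w(C̄_ℝ)`. -/
def titsCone (A : Matrix ι ι ℤ) (hA : IsGCM A) : Set (ι → ℝ) :=
  ⋃ w ∈ weylGroup A hA, actR w '' (weylChamberCl (ι := ι))

/-- The regular part of the Tits cone `T_{ℝ,reg} = ∪_{w ∈ W} w(C_ℝ)`. -/
def titsConeReg (A : Matrix ι ι ℤ) (hA : IsGCM A) : Set (ι → ℝ) :=
  ⋃ w ∈ weylGroup A hA, actR w '' (weylChamber (ι := ι))

/-- The normalized regular subset `Xreg^N = {Z ∈ Xreg : φ^I(Z) = 1/2}`: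
the image `Z(I₀)` is a sector `{r e^{iπφ} : r > 0, φ₁ ≤ φ ≤ φ₂}` with
`φ₂ - φ₁ < 1` and midpoint `(φ₁ + φ₂)/2 = 1/2`. -/
def XregN (A : Matrix ι ι ℤ) (hA : IsGCM A) : Set (ι → ℂ) :=
  {Z | Z ∈ Xreg A hA ∧ ∃ φ₁ φ₂ : ℝ, φ₁ ≤ φ₂ ∧ φ₂ - φ₁ < 1 ∧ φ₁ + φ₂ = 1 ∧
    pairC Z '' (imCone A hA \ {0}) = sector φ₁ φ₂}

/-- The semi-closed upper half-plane `H = ℍ ∪ ℝ_{<0}`. -/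
def semiClosedH : Set ℂ := {z | 0 < z.im} ∪ {z | z.im = 0 ∧ z.re < 0}

/-- The normalized complexified Weyl chamber
`C^N = {Z ∈ Xreg^N : Z(α i) ∈ H for all i}`. -/
def CN (A : Matrix ι ι ℤ) (hA : IsGCM A) : Set (ι → ℂ) :=
  {Z | Z ∈ XregN A hA ∧ ∀ i, Z i ∈ semiClosedH}

/-- The regular subset of the complexified Tits cone:
`T_reg = {Z ∈ Xreg : Z(I₀) ⊆ ℍ}`. -/
def Treg (A : Matrix ι ι ℤ) (hA : IsGCM A) : Set (ι → ℂ) :=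
  {Z | Z ∈ Xreg A hA ∧ ∀ l ∈ imCone A hA \ {0}, 0 < (pairC Z l).im}

open Classical in
/-- The phase `φ^I(Z)` of the imaginary cone with respect to `Z`, normalized by its
representative with `0 < φ₁`, `φ₂ < 1` (which exists and is unique when `Z(I₀) ⊆ ℍ`). -/
def phaseI (A : Matrix ι ι ℤ) (hA : IsGCM A) (Z : ι → ℂ) : ℝ :=
  if h : ∃ p : ℝ × ℝ, p.1 ≤ p.2 ∧ p.2 - p.1 < 1 ∧ 0 < p.1 ∧ p.2 < 1 ∧
      pairC Z '' (imCone A hA \ {0}) = sector p.1 p.2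
  then (h.choose.1 + h.choose.2) / 2 else 0

/-- The retraction `h_t(Z) = e^{iπt(1/2 - φ^I(Z))} · Z`. -/
def hRetract (A : Matrix ι ι ℤ) (hA : IsGCM A) (t : ℝ) (Z : ι → ℂ) : ι → ℂ :=
  Complex.exp (Real.pi * t * (1 / 2 - phaseI A hA Z) * Complex.I) • Z

/-- The wall `W_{i,+}`. -/
def wallPlus (A : Matrix ι ι ℤ) (hA : IsGCM A) (i : ι) : Set (ι → ℂ) :=
  {Z | Z ∈ XregN A hA ∧ ((Z i).im = 0 ∧ 0 < (Z i).re) ∧ ∀ j, j ≠ i → 0 < (Z j).im}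

/-- The wall `W_{i,-}`. -/
def wallMinus (A : Matrix ι ι ℤ) (hA : IsGCM A) (i : ι) : Set (ι → ℂ) :=
  {Z | Z ∈ XregN A hA ∧ ((Z i).im = 0 ∧ (Z i).re < 0) ∧ ∀ j, j ≠ i → 0 < (Z j).im}

/-- The defining relations of the Artin group attached to a symmetric GCM:
`σ i σ j = σ j σ i` if `a i j = 0` and `σ i σ j σ i = σ j σ i σ j` if `a i j = -1`. -/
def artinRels (A : Matrix ι ι ℤ) : Set (FreeGroup ι) :=
  {r | ∃ i j : ι,
    (A i j = 0 ∧ r = FreeGroup.of i * FreeGroup.of j *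
      (FreeGroup.of j * FreeGroup.of i)⁻¹) ∨
    (A i j = -1 ∧ r = FreeGroup.of i * FreeGroup.of j * FreeGroup.of i *
      (FreeGroup.of j * FreeGroup.of i * FreeGroup.of j)⁻¹)}

/-- The Artin group attached to a symmetric GCM. -/
def ArtinGroup (A : Matrix ι ι ℤ) := PresentedGroup (artinRels A)

instance (A : Matrix ι ι ℤ) : Group (ArtinGroup A) :=
  inferInstanceAs (Group (PresentedGroup (artinRels A)))

lemma IsGCM.submatrix {κ : Type*} [Fintype κ] [DecidableEq κ] {A : Matrix ι ι ℤ}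
    (hA : IsGCM A) (f : κ → ι) (hf : Function.Injective f) :
    IsGCM (A.submatrix f f) :=
  ⟨hA.1.submatrix f, fun i => hA.2.1 (f i),
    fun i j hij => hA.2.2 _ _ fun h => hij (hf h)⟩

/-! ### Auxiliary Coxeter-theoretic development -/

section Coxeter

variable (A : Matrix ι ι ℤ) (hA : IsGCM A)

@[simp] lemma lequiv_mul_apply (f g : (ι → ℤ) ≃ₗ[ℤ] (ι → ℤ)) (x : ι → ℤ) :
    (f * g) x = f (g x) := rfl

@[simp] lemma lequiv_one_apply (x : ι → ℤ) : (1 : (ι → ℤ) ≃ₗ[ℤ] (ι → ℤ)) x = x := rfl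

lemma srefl_apply (i : ι) (x : ι → ℤ) :
    srefl A hA i x = x - corootFn A i x • sroot i :=
  Module.reflection_apply x (corootFn_sroot A hA i)

lemma corootFn_sroot' (i j : ι) : corootFn A i (sroot j) = A j i := by
  have h : ∀ k, (sroot j) k * A k i = if k = j then A j i else 0 := by
    intro k
    by_cases h : k = j <;> simp [sroot, Pi.single_apply, h]
  have h2 : corootFn A i (sroot j) = ∑ k, (sroot j) k * A k i := rfl
  rw [h2]
  simp [h]

lemma srefl_sroot (i j : ι) :
    srefl A hA i (sroot j) = sroot j - A j i • sroot i := by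
  rw [srefl_apply, corootFn_sroot']

lemma srefl_sq (i : ι) : srefl A hA i * srefl A hA i = 1 :=
  LinearEquiv.ext fun x => Module.involutive_reflection (corootFn_sroot A hA i) x

lemma srefl_inv (i : ι) : (srefl A hA i)⁻¹ = srefl A hA i :=
  inv_eq_of_mul_eq_one_right (srefl_sq A hA i)

/-- Product of simple reflections along a word. -/
def wp (l : List ι) : (ι → ℤ) ≃ₗ[ℤ] (ι → ℤ) := (l.map (srefl A hA)).prod

@[simp] lemma wp_nil : wp A hA [] = 1 := rfl

@[simp] lemma wp_cons (a : ι) (l : List ι) :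
    wp A hA (a :: l) = srefl A hA a * wp A hA l := by
  simp [wp]

lemma wp_append (l₁ l₂ : List ι) :
    wp A hA (l₁ ++ l₂) = wp A hA l₁ * wp A hA l₂ := by
  simp [wp]

lemma wp_singleton (a : ι) : wp A hA [a] = srefl A hA a := by simp

lemma wp_reverse (l : List ι) : wp A hA l.reverse = (wp A hA l)⁻¹ := by
  induction l with
  | nil => simp
  | cons a l ih =>
      simp only [List.reverse_cons, wp_append, ih, wp_cons, mul_inv_rev, wp_singleton,
        srefl_inv, wp_nil, mul_one]

/-- Expressibility by a word with letters satisfying `P`. -/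
def ExprP (P : ι → Prop) (w : (ι → ℤ) ≃ₗ[ℤ] (ι → ℤ)) : Prop :=
  ∃ l : List ι, (∀ x ∈ l, P x) ∧ wp A hA l = w

/-- Minimal length of a word with letters satisfying `P` expressing `w`. -/
noncomputable def lenP (P : ι → Prop) (w : (ι → ℤ) ≃ₗ[ℤ] (ι → ℤ)) : ℕ :=
  sInf {n | ∃ l : List ι, (∀ x ∈ l, P x) ∧ l.length = n ∧ wp A hA l = w}

variable {A hA}

lemma ExprP.one {P : ι → Prop} : ExprP A hA P 1 := ⟨[], by simp, rfl⟩

lemma ExprP.srefl {P : ι → Prop} {i : ι} (h : P i) : ExprP A hA P (srefl A hA i) :=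
  ⟨[i], by simpa using h, wp_singleton A hA i⟩

lemma ExprP.mul {P : ι → Prop} {w₁ w₂} (h₁ : ExprP A hA P w₁) (h₂ : ExprP A hA P w₂) :
    ExprP A hA P (w₁ * w₂) := by
  obtain ⟨l₁, hl₁, rfl⟩ := h₁
  obtain ⟨l₂, hl₂, rfl⟩ := h₂
  refine ⟨l₁ ++ l₂, ?_, wp_append A hA l₁ l₂⟩
  intro x hx
  rcases List.mem_append.1 hx with h | h
  exacts [hl₁ x h, hl₂ x h]

lemma ExprP.inv {P : ι → Prop} {w} (h : ExprP A hA P w) : ExprP A hA P w⁻¹ := by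
  obtain ⟨l, hl, rfl⟩ := h
  exact ⟨l.reverse, fun x hx => hl x (List.mem_reverse.1 hx), wp_reverse A hA l⟩

lemma ExprP.mono {P Q : ι → Prop} (hPQ : ∀ x, P x → Q x) {w} (h : ExprP A hA P w) :
    ExprP A hA Q w := by
  obtain ⟨l, hl, rfl⟩ := h
  exact ⟨l, fun x hx => hPQ x (hl x hx), rfl⟩

lemma lenP_le {P : ι → Prop} {w} (l : List ι) (hl : ∀ x ∈ l, P x)
    (hw : wp A hA l = w) : lenP A hA P w ≤ l.length :=
  Nat.sInf_le ⟨l, hl, rfl, hw⟩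

lemma exists_min_word {P : ι → Prop} {w} (h : ExprP A hA P w) :
    ∃ l : List ι, (∀ x ∈ l, P x) ∧ l.length = lenP A hA P w ∧ wp A hA l = w := by
  obtain ⟨l, hl, hw⟩ := h
  have hne : {n | ∃ l : List ι, (∀ x ∈ l, P x) ∧ l.length = n ∧ wp A hA l = w}.Nonempty :=
    ⟨l.length, l, hl, rfl, hw⟩
  exact Nat.sInf_mem hne

lemma lenP_eq_zero {P : ι → Prop} {w} (h : ExprP A hA P w)
    (h0 : lenP A hA P w = 0) : w = 1 := by
  obtain ⟨l, -, hlen, hw⟩ := exists_min_word h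
  rw [h0, List.length_eq_zero_iff] at hlen
  subst hlen
  simpa using hw.symm

lemma lenP_mul_le {P : ι → Prop} {w₁ w₂} (h₁ : ExprP A hA P w₁) (h₂ : ExprP A hA P w₂) :
    lenP A hA P (w₁ * w₂) ≤ lenP A hA P w₁ + lenP A hA P w₂ := by
  obtain ⟨l₁, hl₁, hlen₁, hw₁⟩ := exists_min_word h₁
  obtain ⟨l₂, hl₂, hlen₂, hw₂⟩ := exists_min_word h₂
  have := lenP_le (hA := hA) (l₁ ++ l₂) (fun x hx => by
    rcases List.mem_append.1 hx with h | h
    exacts [hl₁ x h, hl₂ x h]) (by rw [wp_append, hw₁, hw₂])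
  simpa [hlen₁, hlen₂] using this

lemma lenP_inv_le {P : ι → Prop} {w} (h : ExprP A hA P w) :
    lenP A hA P w⁻¹ ≤ lenP A hA P w := by
  obtain ⟨l, hl, hlen, hw⟩ := exists_min_word h
  have := lenP_le (hA := hA) l.reverse (fun x hx => hl x (List.mem_reverse.1 hx))
    (by rw [wp_reverse, hw])
  simpa [hlen] using this

lemma lenP_inv {P : ι → Prop} {w} (h : ExprP A hA P w) :
    lenP A hA P w⁻¹ = lenP A hA P w :=
  le_antisymm (lenP_inv_le h) (by simpa using lenP_inv_le h.inv)

lemma lenP_mono {P Q : ι → Prop} (hPQ : ∀ x, P x → Q x) {w} (h : ExprP A hA P w) :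
    lenP A hA Q w ≤ lenP A hA P w := by
  obtain ⟨l, hl, hlen, hw⟩ := exists_min_word h
  have := lenP_le l (fun x hx => hPQ x (hl x hx)) hw
  simpa [hlen] using this

lemma srefl_ne_one (i : ι) : srefl A hA i ≠ 1 := by
  intro h
  have h1 : srefl A hA i (sroot i) = sroot i := by rw [h]; rfl
  rw [srefl_sroot, hA.2.1] at h1
  have h2 := congrFun h1 i
  simp [sroot, Pi.single_apply] at h2

lemma srefl_ne {i j : ι} (hij : i ≠ j) : srefl A hA i ≠ srefl A hA j := by
  intro h
  have h1 : srefl A hA i (sroot i) i = srefl A hA j (sroot i) i := by rw [h]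
  rw [srefl_sroot, srefl_sroot, hA.2.1] at h1
  simp [sroot, Pi.single_apply, Ne.symm hij] at h1

lemma chainReduce (l : List ι) :
    ∃ l' : List ι, l'.Chain' (· ≠ ·) ∧ wp A hA l' = wp A hA l ∧
      l'.length ≤ l.length ∧ ∀ x ∈ l', x ∈ l := by
  induction l with
  | nil => exact ⟨[], List.isChain_nil, rfl, le_refl _, by simp⟩
  | cons a l ih =>
      obtain ⟨l', hc, hp, hlen, hmem⟩ := ih
      match l', hc, hp, hlen, hmem with
      | [], hc, hp, hlen, hmem =>
          refine ⟨[a], List.isChain_singleton a, ?_, by simp, by simp⟩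
          rw [wp_singleton, wp_cons, ← hp, wp_nil, mul_one]
      | c :: rest, hc, hp, hlen, hmem =>
          by_cases hac : a = c
          · refine ⟨rest, hc.tail, ?_, ?_, ?_⟩
            · rw [wp_cons, ← hp, wp_cons, ← mul_assoc, hac, srefl_sq, one_mul]
            · simp only [List.length_cons] at hlen ⊢; omega
            · intro x hx
              exact List.mem_cons_of_mem a (hmem x (List.mem_cons_of_mem c hx))
          · refine ⟨a :: c :: rest, List.isChain_cons_cons.2 ⟨hac, hc⟩, ?_, ?_, ?_⟩
            · rw [wp_cons, hp, wp_cons]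
            · simp only [List.length_cons] at hlen ⊢; omega
            · intro x hx
              rcases List.mem_cons.1 hx with h | h
              · exact h ▸ (List.mem_cons_self (a := a))
              · exact List.mem_cons_of_mem a (hmem x h)

end Coxeter
section Rank2

variable {A : Matrix ι ι ℤ} {hA : IsGCM A} {s t : ι}

lemma srefl_comb_s (hst : s ≠ t) (p q : ℤ) :
    srefl A hA s (p • sroot s + q • sroot t) =
      (-p - A t s * q) • sroot s + q • sroot t := by
  rw [map_add, map_smul, map_smul, srefl_sroot, srefl_sroot, hA.2.1]
  module

lemma srefl_comb_t (hst : s ≠ t) (p q : ℤ) :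
    srefl A hA t (p • sroot s + q • sroot t) =
      p • sroot s + (-q - A s t * p) • sroot t := by
  rw [map_add, map_smul, map_smul, srefl_sroot, srefl_sroot, hA.2.1]
  module

lemma comm0 (hst : s ≠ t) (h : A s t = 0) :
    srefl A hA s * srefl A hA t = srefl A hA t * srefl A hA s := by
  have hts : A t s = 0 := (hA.1.apply s t).trans h
  refine LinearEquiv.ext fun x => ?_
  simp only [lequiv_mul_apply, srefl_apply, map_sub, map_smul, corootFn_sroot', h, hts]
  module

lemma braid1 (hst : s ≠ t) (h : A s t = -1) :
    srefl A hA s * srefl A hA t * srefl A hA s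
      = srefl A hA t * srefl A hA s * srefl A hA t := by
  have hts : A t s = -1 := (hA.1.apply s t).trans h
  refine LinearEquiv.ext fun x => ?_
  simp only [lequiv_mul_apply, srefl_apply, map_sub, map_smul, corootFn_sroot', h, hts,
    hA.2.1]
  module

lemma cl0 (hst : s ≠ t) (h : A s t = 0) :
    ∀ l : List ι, (∀ x ∈ l, x = s ∨ x = t) →
      wp A hA l ∈ ({1, srefl A hA s, srefl A hA t,
        srefl A hA s * srefl A hA t} : Set ((ι → ℤ) ≃ₗ[ℤ] (ι → ℤ))) := by
  intro l
  induction l with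
  | nil => intro _; simp
  | cons a l ih =>
      intro hmem
      have hm := ih (fun x hx => hmem x (List.mem_cons_of_mem a hx))
      have ha := hmem a (List.mem_cons_self)
      rw [wp_cons]
      rcases ha with rfl | rfl <;> rcases hm with hm | hm | hm | hm
      · rw [hm, mul_one]; exact Set.mem_insert_of_mem _ (Set.mem_insert _ _)
      · rw [hm, srefl_sq]; exact Set.mem_insert _ _
      · rw [hm]; exact Set.mem_insert_of_mem _ (Set.mem_insert_of_mem _ (Set.mem_insert_of_mem _ (rfl)))
      · rw [hm, ← mul_assoc, srefl_sq, one_mul]; exact Set.mem_insert_of_mem _ (Set.mem_insert_of_mem _ (Set.mem_insert _ _))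
      · rw [hm, mul_one]; exact Set.mem_insert_of_mem _ (Set.mem_insert_of_mem _ (Set.mem_insert _ _))
      · rw [hm, ← comm0 hst h]; exact Set.mem_insert_of_mem _ (Set.mem_insert_of_mem _ (Set.mem_insert_of_mem _ (rfl)))
      · rw [hm, srefl_sq]; exact Set.mem_insert _ _
      · rw [hm, ← mul_assoc, ← comm0 hst h, mul_assoc, srefl_sq, mul_one]; exact Set.mem_insert_of_mem _ (Set.mem_insert _ _)

lemma cl1 (hst : s ≠ t) (h : A s t = -1) :
    ∀ l : List ι, (∀ x ∈ l, x = s ∨ x = t) →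
      wp A hA l ∈ ({1, srefl A hA s, srefl A hA t,
        srefl A hA s * srefl A hA t, srefl A hA t * srefl A hA s,
        srefl A hA s * srefl A hA t * srefl A hA s} : Set ((ι → ℤ) ≃ₗ[ℤ] (ι → ℤ))) := by
  intro l
  induction l with
  | nil => intro _; simp
  | cons a l ih =>
      intro hmem
      have hm := ih (fun x hx => hmem x (List.mem_cons_of_mem a hx))
      have ha := hmem a (List.mem_cons_self)
      rw [wp_cons]
      rcases ha with rfl | rfl <;> rcases hm with hm | hm | hm | hm | hm | hm
      · rw [hm, mul_one]; exact Set.mem_insert_of_mem _ (Set.mem_insert _ _)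
      · rw [hm, srefl_sq]; exact Set.mem_insert _ _
      · rw [hm]; exact Set.mem_insert_of_mem _ (Set.mem_insert_of_mem _ (Set.mem_insert_of_mem _ (Set.mem_insert _ _)))
      · rw [hm, ← mul_assoc, srefl_sq, one_mul]; exact Set.mem_insert_of_mem _ (Set.mem_insert_of_mem _ (Set.mem_insert _ _))
      · rw [hm, ← mul_assoc]; exact Set.mem_insert_of_mem _ (Set.mem_insert_of_mem _ (Set.mem_insert_of_mem _ (Set.mem_insert_of_mem _ (Set.mem_insert_of_mem _ (rfl)))))
      · rw [hm, ← mul_assoc, ← mul_assoc, srefl_sq, one_mul]; exact Set.mem_insert_of_mem _ (Set.mem_insert_of_mem _ (Set.mem_insert_of_mem _ (Set.mem_insert_of_mem _ (Set.mem_insert _ _))))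
      · rw [hm, mul_one]; exact Set.mem_insert_of_mem _ (Set.mem_insert_of_mem _ (Set.mem_insert _ _))
      · rw [hm]; exact Set.mem_insert_of_mem _ (Set.mem_insert_of_mem _ (Set.mem_insert_of_mem _ (Set.mem_insert_of_mem _ (Set.mem_insert _ _))))
      · rw [hm, srefl_sq]; exact Set.mem_insert _ _
      · rw [hm, ← mul_assoc, ← braid1 hst h]; exact Set.mem_insert_of_mem _ (Set.mem_insert_of_mem _ (Set.mem_insert_of_mem _ (Set.mem_insert_of_mem _ (Set.mem_insert_of_mem _ (rfl)))))
      · rw [hm, ← mul_assoc, srefl_sq, one_mul]; exact Set.mem_insert_of_mem _ (Set.mem_insert _ _)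
      · rw [hm, braid1 hst h, ← mul_assoc, ← mul_assoc, srefl_sq, one_mul]; exact Set.mem_insert_of_mem _ (Set.mem_insert_of_mem _ (Set.mem_insert_of_mem _ (Set.mem_insert _ _)))

lemma mem_of_lenP_le_one {w} (hw : ExprP A hA (fun x => x = s ∨ x = t) w)
    (hl : lenP A hA (fun x => x = s ∨ x = t) w ≤ 1) :
    w = 1 ∨ w = srefl A hA s ∨ w = srefl A hA t := by
  obtain ⟨l, hmem, hlen, hwp⟩ := exists_min_word hw
  match l, hmem, hlen, hwp with
  | [], _, _, hwp => left; rw [← hwp, wp_nil]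
  | [a], hmem, _, hwp =>
      rcases hmem a (List.mem_cons_self) with rfl | rfl
      · right; left; rw [← hwp, wp_singleton]
      · right; right; rw [← hwp, wp_singleton]
  | a :: b :: l, _, hlen, _ => simp only [List.length_cons] at hlen; omega

lemma mem_of_lenP_le_two {w} (hw : ExprP A hA (fun x => x = s ∨ x = t) w)
    (hl : lenP A hA (fun x => x = s ∨ x = t) w ≤ 2) :
    w = 1 ∨ w = srefl A hA s ∨ w = srefl A hA t ∨
      w = srefl A hA s * srefl A hA t ∨ w = srefl A hA t * srefl A hA s := by
  obtain ⟨l, hmem, hlen, hwp⟩ := exists_min_word hw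
  match l, hmem, hlen, hwp with
  | [], _, _, hwp => left; rw [← hwp, wp_nil]
  | [a], hmem, _, hwp =>
      rcases hmem a (List.mem_cons_self) with rfl | rfl
      · right; left; rw [← hwp, wp_singleton]
      · right; right; left; rw [← hwp, wp_singleton]
  | [a, b], hmem, _, hwp =>
      have hwp' : srefl A hA a * srefl A hA b = w := by
        rw [← hwp]; simp [wp_cons, mul_assoc]
      rcases hmem a (by simp) with rfl | rfl <;> rcases hmem b (by simp) with rfl | rfl
      · left; rw [← hwp', srefl_sq]
      · right; right; right; left; rw [← hwp']
      · right; right; right; right; rw [← hwp']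
      · left; rw [← hwp', srefl_sq]
  | a :: b :: c :: l, _, hlen, _ => simp only [List.length_cons] at hlen; omega

lemma altPos (hst : s ≠ t) (hb : A s t ≤ -2) :
    ∀ l : List ι, (∀ x ∈ l, x = s ∨ x = t) → l.Chain' (· ≠ ·) →
      (l = [] ∨ l.getLast? = some t) →
      ∃ p q : ℤ, 0 ≤ p ∧ 0 ≤ q ∧
        wp A hA l (sroot s) = p • sroot s + q • sroot t ∧
        (∀ c, l.head? = some c → (c = t → p ≤ q) ∧ (c = s → q ≤ p)) := by
  have hts : A t s ≤ -2 := (hA.1.apply s t).symm ▸ hb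
  intro l
  induction l with
  | nil =>
      intro _ _ _
      refine ⟨1, 0, by omega, le_refl 0, by simp, by simp⟩
  | cons a l ih =>
      intro hmem hchain hlast
      match l, hmem, hchain, hlast, ih with
      | [], hmem, _, hlast, _ =>
          have hat : a = t := by
            rcases hlast with h | h
            · exact absurd h (by simp)
            · simpa using h
          refine ⟨1, -A s t, by omega, by omega, ?_, ?_⟩
          · rw [wp_singleton, hat, srefl_sroot]; module
          · intro c hc
            simp only [List.head?_cons, Option.some.injEq] at hc
            subst hc
            exact ⟨fun _ => by omega, fun h => absurd (h.symm.trans hat) hst⟩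
      | d :: rest, hmem, hchain, hlast, ih =>
          have had : a ≠ d := (List.isChain_cons_cons.1 hchain).1
          have hc' : (d :: rest).Chain' (· ≠ ·) := (List.isChain_cons_cons.1 hchain).2
          have hlast' : d :: rest = [] ∨ (d :: rest).getLast? = some t := by
            right
            rcases hlast with h | h
            · exact absurd h (by simp)
            · rwa [List.getLast?_cons_cons] at h
          obtain ⟨p', q', hp', hq', heq, hhead⟩ :=
            ih (fun x hx => hmem x (List.mem_cons_of_mem a hx)) hc' hlast'
          have hd := hmem d (List.mem_cons_of_mem a (List.mem_cons_self))
          rcases hmem a (List.mem_cons_self) with has | hat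
          · -- a = s
            have hdt : d = t := by
              rcases hd with h | h
              · exact absurd (has.trans h.symm) had
              · exact h
            have hpq : p' ≤ q' := (hhead d (by simp)).1 hdt
            refine ⟨-p' - A t s * q', q', by nlinarith, hq', ?_, ?_⟩
            · rw [wp_cons, lequiv_mul_apply, heq, has, srefl_comb_s hst]
            · intro c hc
              simp only [List.head?_cons, Option.some.injEq] at hc
              subst hc
              constructor
              · intro hct
                exact absurd (has.symm.trans hct) hst
              · intro _
                nlinarith
          · -- a = t
            have hds : d = s := by
              rcases hd with h | h
              · exact h
              · exact absurd (hat.trans h.symm) had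
            have hpq : q' ≤ p' := (hhead d (by simp)).2 hds
            refine ⟨p', -q' - A s t * p', hp', by nlinarith, ?_, ?_⟩
            · rw [wp_cons, lequiv_mul_apply, heq, hat, srefl_comb_t hst]
            · intro c hc
              simp only [List.head?_cons, Option.some.injEq] at hc
              subst hc
              constructor
              · intro _
                nlinarith
              · intro hcs
                exact absurd (hat.symm.trans hcs).symm hst

lemma rsrt_sroot (hst : s ≠ t) :
    (srefl A hA s * srefl A hA t) (sroot s) =
      (A s t * A t s - 1) • sroot s + (-A s t) • sroot t := by
  rw [lequiv_mul_apply, srefl_sroot, map_sub, map_smul, srefl_sroot, srefl_sroot,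
    hA.2.1]
  module

lemma lenP_one' {P : ι → Prop} : lenP A hA P 1 = 0 :=
  Nat.le_zero.mp (by simpa using lenP_le (A := A) (hA := hA) (P := P) [] (by simp) (wp_nil A hA))

lemma rank2 (hst : s ≠ t) {w} (h : ExprP A hA (fun x => x = s ∨ x = t) w)
    (hyp : lenP A hA (fun x => x = s ∨ x = t) w ≤
      lenP A hA (fun x => x = s ∨ x = t) (w * srefl A hA s)) :
    ∃ p q : ℤ, 0 ≤ p ∧ 0 ≤ q ∧ w (sroot s) = p • sroot s + q • sroot t := by
  set P : ι → Prop := fun x => x = s ∨ x = t with hP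
  have hale : A s t ≤ 0 := hA.2.2 s t hst
  have hsymm : A t s = A s t := hA.1.apply s t
  -- the case `w = srefl s` is excluded
  have hcase_rs : w = srefl A hA s → False := by
    rintro rfl
    rw [srefl_sq, lenP_one'] at hyp
    exact srefl_ne_one s (lenP_eq_zero h (by omega))
  rcases eq_or_lt_of_le hale with h0 | hlt
  · -- A s t = 0
    obtain ⟨l, hmem, hwp⟩ := h
    have hcl := cl0 (hA := hA) hst h0 l hmem
    rw [hwp] at hcl
    rcases hcl with rfl | hw | rfl | rfl
    · exact ⟨1, 0, by omega, le_refl 0, by simp⟩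
    · exact absurd hw hcase_rs
    · exact ⟨1, -A s t, by omega, by omega, by rw [srefl_sroot]; module⟩
    · exfalso
      have h1 : srefl A hA s * srefl A hA t * srefl A hA s = srefl A hA t := by
        rw [mul_assoc, show srefl A hA t * srefl A hA s = srefl A hA s * srefl A hA t
          from (comm0 hst h0).symm, ← mul_assoc, srefl_sq, one_mul]
      have h2 : lenP A hA P (srefl A hA s * srefl A hA t * srefl A hA s) ≤ 1 := by
        rw [h1]
        simpa using lenP_le (P := P) [t] (by simp [hP]) (wp_singleton A hA t)
      have h3 : lenP A hA P (srefl A hA s * srefl A hA t) ≤ 1 := le_trans hyp h2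
      have hE : ExprP A hA P (srefl A hA s * srefl A hA t) :=
        (ExprP.srefl (show P s from Or.inl rfl)).mul (ExprP.srefl (show P t from Or.inr rfl))
      rcases mem_of_lenP_le_one hE h3 with h4 | h4 | h4
      · exact srefl_ne hst (mul_eq_one_iff_eq_inv.1 h4 |>.trans (srefl_inv A hA t))
      · exact srefl_ne_one t (mul_left_cancel (a := srefl A hA s) (h4.trans (mul_one _).symm))
      · exact srefl_ne_one s (mul_right_cancel (b := srefl A hA t) (h4.trans (one_mul _).symm))
  · have hle1 : A s t ≤ -1 := by omega
    rcases eq_or_lt_of_le hle1 with h1 | h2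
    · -- A s t = -1
      obtain ⟨l, hmem, hwp⟩ := h
      have hcl := cl1 (hA := hA) hst h1 l hmem
      rw [hwp] at hcl
      rcases hcl with rfl | hw | rfl | rfl | rfl | rfl
      · exact ⟨1, 0, by omega, le_refl 0, by simp⟩
      · exact absurd hw hcase_rs
      · exact ⟨1, -A s t, by omega, by omega, by rw [srefl_sroot]; module⟩
      · exact ⟨A s t * A t s - 1, -A s t, by nlinarith, by omega, rsrt_sroot hst⟩
      · exfalso
        have heq1 : srefl A hA t * srefl A hA s * srefl A hA s = srefl A hA t := by
          rw [mul_assoc, srefl_sq, mul_one]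
        have h2' : lenP A hA P (srefl A hA t * srefl A hA s * srefl A hA s) ≤ 1 := by
          rw [heq1]
          simpa using lenP_le (P := P) [t] (by simp [hP]) (wp_singleton A hA t)
        have h3 : lenP A hA P (srefl A hA t * srefl A hA s) ≤ 1 := le_trans hyp h2'
        have hE : ExprP A hA P (srefl A hA t * srefl A hA s) :=
          (ExprP.srefl (show P t from Or.inr rfl)).mul (ExprP.srefl (show P s from Or.inl rfl))
        rcases mem_of_lenP_le_one hE h3 with h4 | h4 | h4
        · exact srefl_ne (Ne.symm hst) (mul_eq_one_iff_eq_inv.1 h4 |>.trans (srefl_inv A hA s))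
        · exact srefl_ne_one t
            (mul_right_cancel (b := srefl A hA s) (h4.trans (one_mul _).symm))
        · exact srefl_ne_one s
            (mul_left_cancel (a := srefl A hA t) (h4.trans (mul_one _).symm))
      · exfalso
        have heq1 : srefl A hA s * srefl A hA t * srefl A hA s * srefl A hA s
            = srefl A hA s * srefl A hA t := by
          rw [mul_assoc, srefl_sq, mul_one]
        have h2' : lenP A hA P (srefl A hA s * srefl A hA t * srefl A hA s * srefl A hA s)
            ≤ 2 := by
          rw [heq1]
          have := lenP_le (A := A) (hA := hA) (P := P) [s, t] (by simp [hP])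
            (show wp A hA [s, t] = srefl A hA s * srefl A hA t by
              simp [wp_cons, mul_assoc])
          simpa using this
        have h3 : lenP A hA P (srefl A hA s * srefl A hA t * srefl A hA s) ≤ 2 :=
          le_trans hyp h2'
        have hE : ExprP A hA P (srefl A hA s * srefl A hA t * srefl A hA s) :=
          ((ExprP.srefl (show P s from Or.inl rfl)).mul (ExprP.srefl (show P t from Or.inr rfl))).mul
            (ExprP.srefl (show P s from Or.inl rfl))
        rcases mem_of_lenP_le_two hE h3 with h4 | h4 | h4 | h4 | h4
        · -- s t s = 1
          have h5 : srefl A hA s * srefl A hA t = srefl A hA s := by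
            have := mul_eq_one_iff_eq_inv.1 h4
            rw [srefl_inv] at this
            exact this
          exact srefl_ne_one t
            (mul_left_cancel (a := srefl A hA s) (h5.trans (mul_one _).symm))
        · -- s t s = s
          have h5 : srefl A hA s * srefl A hA t = 1 :=
            mul_right_cancel (b := srefl A hA s) (h4.trans (one_mul _).symm)
          exact srefl_ne hst (mul_eq_one_iff_eq_inv.1 h5 |>.trans (srefl_inv A hA t))
        · -- s t s = t : use braid
          have h5 : srefl A hA t * (srefl A hA s * srefl A hA t) = srefl A hA t * 1 := by
            rw [mul_one, ← mul_assoc, ← braid1 hst h1]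
            exact h4
          have h6 := mul_left_cancel h5
          exact srefl_ne hst (mul_eq_one_iff_eq_inv.1 h6 |>.trans (srefl_inv A hA t))
        · -- s t s = s t
          have h5 : (srefl A hA s * srefl A hA t) * srefl A hA s
              = (srefl A hA s * srefl A hA t) * 1 := by rw [mul_one]; exact h4
          exact srefl_ne_one s (mul_left_cancel h5)
        · -- s t s = t s
          have h5 : (srefl A hA t * srefl A hA s) * srefl A hA t
              = (srefl A hA t * srefl A hA s) * 1 := by
            rw [mul_one, ← braid1 hst h1]
            exact h4
          exact srefl_ne_one t (mul_left_cancel h5)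
    · -- A s t ≤ -2
      have hb2 : A s t ≤ -2 := by omega
      rcases Nat.eq_zero_or_pos (lenP A hA P w) with hm0 | hm1
      · exact ⟨1, 0, by omega, le_refl 0, by rw [lenP_eq_zero h hm0]; simp⟩
      · obtain ⟨l, hmem, hlen, hwp⟩ := exists_min_word h
        obtain ⟨l', hch, hwp', hlen', hmem'⟩ := chainReduce l
        have hmem'' : ∀ x ∈ l', P x := fun x hx => hmem x (hmem' x hx)
        have hwl' : wp A hA l' = w := hwp'.trans hwp
        have hminle : lenP A hA P w ≤ l'.length := lenP_le l' hmem'' hwl'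
        rcases l'.eq_nil_or_concat' with h0 | ⟨l₂, x, rfl⟩
        · rw [h0] at hminle; simp at hminle; omega
        · have hx : P x := hmem'' x (by simp)
          have hwx : w * srefl A hA x = wp A hA l₂ := by
            rw [← hwl', wp_append, wp_singleton, mul_assoc, srefl_sq, mul_one]
          rcases hx with hxs | hxt
          · exfalso
            rw [hxs] at hwx
            have hle : lenP A hA P (w * srefl A hA s) ≤ l₂.length :=
              lenP_le (P := P) l₂ (fun y hy => hmem'' y (by simp [hy])) hwx.symm
            have hlen2 : (l₂ ++ [x]).length ≤ l.length := hlen'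
            have hmin2 := hminle
            simp only [List.length_append, List.length_cons, List.length_nil] at hlen2 hmin2
            omega
          · obtain ⟨p, q, hp, hq, heq, -⟩ := altPos (hA := hA) hst hb2 (l₂ ++ [x]) hmem'' hch
              (Or.inr (by simp [hxt]))
            exact ⟨p, q, hp, hq, by rw [← hwl']; exact heq⟩
end Rank2
section KeyPos

variable {A : Matrix ι ι ℤ} {hA : IsGCM A}

/-- KEY LEMMA: if `len (w * r_s) ≥ len w` then `w (α_s) ≥ 0` coordinatewise. -/
theorem key_pos : ∀ n : ℕ, ∀ w, ExprP A hA (fun _ => True) w →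
    lenP A hA (fun _ => True) w = n →
    ∀ s : ι, n ≤ lenP A hA (fun _ => True) (w * srefl A hA s) →
    ∀ k, 0 ≤ w (sroot s) k := by
  intro n
  induction n using Nat.strong_induction_on with
  | _ n IH =>
  intro w hw hlen s hs k
  rcases Nat.eq_zero_or_pos n with hn0 | hn1
  · have hw1 : w = 1 := lenP_eq_zero hw (by omega)
    subst hw1
    simp only [lequiv_one_apply]
    by_cases hks : k = s <;> simp [sroot, Pi.single_apply, hks]
  · obtain ⟨l, -, hllen, hwl⟩ := exists_min_word hw
    rcases l.eq_nil_or_concat' with rfl | ⟨l₁, t, rfl⟩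
    · simp at hllen; omega
    · have hwt : w * srefl A hA t = wp A hA l₁ := by
        rw [← hwl, wp_append, wp_singleton, mul_assoc, srefl_sq, mul_one]
      have hl₁len : l₁.length + 1 = n := by simpa [hlen] using hllen
      have hts : t ≠ s := by
        rintro rfl
        have h1 : lenP A hA (fun _ => True) (w * srefl A hA t) ≤ l₁.length :=
          lenP_le l₁ (by simp) hwt.symm
        omega
      set P : ι → Prop := fun x => x = s ∨ x = t with hPdef
      set M : Set ℕ :=
        {m | ∃ g, ExprP A hA P g ∧ lenP A hA P g = m ∧
          lenP A hA (fun _ => True) (w * g) + m = n} with hM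
      have hwtle : lenP A hA (fun _ => True) (w * srefl A hA t) ≤ l₁.length :=
        lenP_le l₁ (by simp) hwt.symm
      have hwtge : n ≤ lenP A hA (fun _ => True) (w * srefl A hA t) + 1 := by
        have heq : w = (w * srefl A hA t) * srefl A hA t := by
          rw [mul_assoc, srefl_sq, mul_one]
        calc n = lenP A hA (fun _ => True) w := hlen.symm
        _ = lenP A hA (fun _ => True) ((w * srefl A hA t) * srefl A hA t) := by rw [← heq]
        _ ≤ lenP A hA (fun _ => True) (w * srefl A hA t)
              + lenP A hA (fun _ => True) (srefl A hA t) :=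
            lenP_mul_le (hw.mul (ExprP.srefl trivial)) (ExprP.srefl trivial)
        _ ≤ lenP A hA (fun _ => True) (w * srefl A hA t) + 1 := by
            have h3 : lenP A hA (fun _ => True) (srefl A hA t) ≤ 1 := by
              simpa using lenP_le (A := A) (hA := hA) (P := fun _ => True) [t] (by simp)
                (wp_singleton A hA t)
            omega
      have hM1 : (1 : ℕ) ∈ M := by
        refine ⟨srefl A hA t, ExprP.srefl (Or.inr rfl), ?_, by omega⟩
        have hle1 : lenP A hA P (srefl A hA t) ≤ 1 := by
          simpa using lenP_le (P := P) [t] (by simp [hPdef]) (wp_singleton A hA t)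
        have hne0 : lenP A hA P (srefl A hA t) ≠ 0 := fun h0 =>
          srefl_ne_one t (lenP_eq_zero (ExprP.srefl (show P t from Or.inr rfl)) h0)
        omega
      have hMbdd : ∀ m ∈ M, m ≤ n := by
        rintro m ⟨g, -, -, hsum⟩
        omega
      set m₀ := sSup M with hm₀
      have hm₀M : m₀ ∈ M := Nat.sSup_mem ⟨1, hM1⟩ ⟨n, fun m hm => hMbdd m hm⟩
      obtain ⟨g, hgP, hglen, hgsum⟩ := hm₀M
      have hm₀1 : 1 ≤ m₀ := le_csSup ⟨n, fun m hm => hMbdd m hm⟩ hM1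
      have hgE : ExprP A hA (fun _ => True) g := hgP.mono (fun _ _ => trivial)
      have hvE : ExprP A hA (fun _ => True) (w * g) := hw.mul hgE
      have hvx : ∀ x, P x →
          lenP A hA (fun _ => True) (w * g) ≤
            lenP A hA (fun _ => True) ((w * g) * srefl A hA x) := by
        intro x hx
        by_contra hcon
        push_neg at hcon
        have hg'P : ExprP A hA P (g * srefl A hA x) := hgP.mul (ExprP.srefl hx)
        have hg'le : lenP A hA P (g * srefl A hA x) ≤ m₀ + 1 := by
          have h1 := lenP_mul_le hgP (ExprP.srefl (show P x from hx))
          have h2 : lenP A hA P (srefl A hA x) ≤ 1 := by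
            simpa using lenP_le (P := P) [x] (by simpa [hPdef] using hx)
              (wp_singleton A hA x)
          omega
        have hwg' : w * (g * srefl A hA x) = (w * g) * srefl A hA x := by
          rw [mul_assoc]
        have hup : n ≤ lenP A hA (fun _ => True) ((w * g) * srefl A hA x)
            + lenP A hA P (g * srefl A hA x) := by
          have hw_eq : w = ((w * g) * srefl A hA x) * (g * srefl A hA x)⁻¹ := by
            group
          calc n = lenP A hA (fun _ => True) w := hlen.symm
          _ = lenP A hA (fun _ => True)
                (((w * g) * srefl A hA x) * (g * srefl A hA x)⁻¹) := by rw [← hw_eq]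
          _ ≤ lenP A hA (fun _ => True) ((w * g) * srefl A hA x)
                + lenP A hA (fun _ => True) ((g * srefl A hA x)⁻¹) :=
              lenP_mul_le (hvE.mul (ExprP.srefl trivial))
                ((hg'P.mono (fun _ _ => trivial)).inv)
          _ ≤ lenP A hA (fun _ => True) ((w * g) * srefl A hA x)
                + lenP A hA P ((g * srefl A hA x)⁻¹) :=
              Nat.add_le_add_left (lenP_mono (fun _ _ => trivial) hg'P.inv) _
          _ = lenP A hA (fun _ => True) ((w * g) * srefl A hA x)
                + lenP A hA P (g * srefl A hA x) := by rw [lenP_inv hg'P]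
        have hg'eq : lenP A hA P (g * srefl A hA x) = m₀ + 1 := by omega
        have hnew : (m₀ + 1) ∈ M := by
          refine ⟨g * srefl A hA x, hg'P, hg'eq, ?_⟩
          rw [hwg']
          omega
        have := le_csSup (⟨n, fun m hm => hMbdd m hm⟩ : BddAbove M) hnew
        omega
      have hhP : ExprP A hA P g⁻¹ := hgP.inv
      have hwvh : w = (w * g) * g⁻¹ := by group
      have hyp2 : lenP A hA P g⁻¹ ≤ lenP A hA P (g⁻¹ * srefl A hA s) := by
        by_contra hcon
        push_neg at hcon
        rw [lenP_inv hgP, hglen] at hcon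
        have h1 : lenP A hA (fun _ => True) (w * srefl A hA s)
            ≤ lenP A hA (fun _ => True) (w * g)
              + lenP A hA P (g⁻¹ * srefl A hA s) := by
          have heqq : w * srefl A hA s = (w * g) * (g⁻¹ * srefl A hA s) := by group
          rw [heqq]
          calc lenP A hA (fun _ => True) ((w * g) * (g⁻¹ * srefl A hA s))
              ≤ lenP A hA (fun _ => True) (w * g)
                + lenP A hA (fun _ => True) (g⁻¹ * srefl A hA s) :=
              lenP_mul_le hvE ((hgE.inv).mul (ExprP.srefl trivial))
          _ ≤ lenP A hA (fun _ => True) (w * g)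
                + lenP A hA P (g⁻¹ * srefl A hA s) :=
              Nat.add_le_add_left
                (lenP_mono (fun _ _ => trivial) (hhP.mul (ExprP.srefl (Or.inl rfl)))) _
        omega
      obtain ⟨p, q, hp, hq, hpq⟩ := rank2 (hA := hA) (Ne.symm hts) hhP hyp2
      have hvlt : lenP A hA (fun _ => True) (w * g) < n := by omega
      have hvs := IH (lenP A hA (fun _ => True) (w * g)) hvlt (w * g) hvE rfl s
        (hvx s (Or.inl rfl))
      have hvt := IH (lenP A hA (fun _ => True) (w * g)) hvlt (w * g) hvE rfl t
        (hvx t (Or.inr rfl))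
      have hfin : w (sroot s) = p • (w * g) (sroot s) + q • (w * g) (sroot t) := by
        conv_lhs => rw [hwvh]
        rw [lequiv_mul_apply, hpq, map_add, map_smul, map_smul]
      rw [hfin]
      have h1 := mul_nonneg hp (hvs k)
      have h2 := mul_nonneg hq (hvt k)
      simp only [Pi.add_apply, Pi.smul_apply, smul_eq_mul]
      omega

end KeyPos
section PosRoots

variable {A : Matrix ι ι ℤ} {hA : IsGCM A}

theorem antidominant_le : ∀ n : ℕ, ∀ w, ExprP A hA (fun _ => True) w →
    lenP A hA (fun _ => True) w = n →
    ∀ lam : ι → ℤ, (∀ i, 0 ≤ lam i) → (∀ i, corootFn A i lam ≤ 0) →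
    ∀ k, lam k ≤ w lam k := by
  intro n
  induction n using Nat.strong_induction_on with
  | _ n IH =>
  intro w hw hlen lam hpos hanti k
  rcases Nat.eq_zero_or_pos n with hn0 | hn1
  · have hw1 : w = 1 := lenP_eq_zero hw (by omega)
    subst hw1
    simp
  · obtain ⟨l, -, hllen, hwl⟩ := exists_min_word hw
    rcases l.eq_nil_or_concat' with rfl | ⟨l₁, i, rfl⟩
    · simp [hlen] at hllen; omega
    · have hl₁len : l₁.length + 1 = n := by simpa [hlen] using hllen
      set w' := wp A hA l₁ with hw'
      have hw'E : ExprP A hA (fun _ => True) w' := ⟨l₁, by simp, rfl⟩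
      have hwdec : w = w' * srefl A hA i := by
        rw [← hwl, wp_append, wp_singleton]
      have hw'le : lenP A hA (fun _ => True) w' ≤ l₁.length :=
        lenP_le l₁ (by simp) rfl
      -- key lemma for w'
      have hkey := key_pos (lenP A hA (fun _ => True) w') w' hw'E rfl i
        (by rw [← hwdec, hlen]; omega)
      -- induction for w'
      have hIH := IH (lenP A hA (fun _ => True) w') (by omega) w' hw'E rfl lam hpos hanti
      have hrefl : srefl A hA i lam = lam + (-(corootFn A i lam)) • sroot i := by
        rw [srefl_apply]
        module
      have : w lam = w' lam + (-(corootFn A i lam)) • w' (sroot i) := by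
        rw [hwdec, lequiv_mul_apply, hrefl, map_add, map_smul]
      rw [this]
      have h1 := mul_nonneg (neg_nonneg.2 (hanti i)) (hkey k)
      have h2 := hIH k
      simp only [Pi.add_apply, Pi.smul_apply, smul_eq_mul]
      omega

lemma weylGroup_expr {w} (hw : w ∈ weylGroup A hA) :
    ExprP A hA (fun _ => True) w := by
  induction hw using Subgroup.closure_induction with
  | mem x hx => obtain ⟨i, rfl⟩ := hx; exact ExprP.srefl trivial
  | one => exact ExprP.one
  | mul x y _ _ hx hy => exact hx.mul hy
  | inv x _ hx => exact hx.inv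

lemma bform_sroot (x : ι → ℤ) (i : ι) : bform A x (sroot i) = corootFn A i x := by
  have h : ∀ k j, x k * A k j * (sroot i) j = if j = i then x k * A k i else 0 := by
    intro k j
    by_cases hji : j = i <;> simp [sroot, Pi.single_apply, hji]
  have h2 : corootFn A i x = ∑ k, x k * A k i := rfl
  rw [bform, h2]
  refine Finset.sum_congr rfl fun k _ => ?_
  rw [Finset.sum_congr rfl fun j _ => h k j]
  simp

lemma posImRoots_nonneg {β} (hβ : β ∈ posImRoots A hA) (i : ι) : 0 ≤ β i := by
  obtain ⟨w, hw, α, hα, rfl⟩ := hβ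
  have hanti : ∀ j, corootFn A j α ≤ 0 := fun j => by
    have h := hα.2.2.2 j
    rwa [bform_sroot] at h
  exact le_trans (hα.1 i)
    (antidominant_le (lenP A hA (fun _ => True) w) w (weylGroup_expr hw) rfl α hα.1 hanti i)

lemma posImRoots_nsmul {β} (hβ : β ∈ posImRoots A hA) (n : ℕ) (hn : 1 ≤ n) :
    (n : ℤ) • β ∈ posImRoots A hA := by
  obtain ⟨w, hw, α, hα, rfl⟩ := hβ
  have hnz : (n : ℤ) ≠ 0 := by exact_mod_cast Nat.one_le_iff_ne_zero.1 hn
  refine ⟨w, hw, (n : ℤ) • α, ⟨?_, ?_, ?_, ?_⟩, (map_smul w _ _).symm⟩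
  · intro i
    simp only [Pi.smul_apply, smul_eq_mul]
    exact mul_nonneg (by positivity) (hα.1 i)
  · exact smul_ne_zero hnz hα.2.1
  · have hset : {i | ((n : ℤ) • α) i ≠ 0} = {i | α i ≠ 0} := by
      ext i
      simp [Pi.smul_apply, smul_eq_mul, hnz, Nat.one_le_iff_ne_zero.1 hn]
    rw [hset]
    exact hα.2.2.1
  · intro i
    rw [bform_sroot, map_smul, smul_eq_mul]
    have := hα.2.2.2 i
    rw [bform_sroot] at this
    exact mul_nonpos_of_nonneg_of_nonpos (by positivity) this

end PosRoots
section Cone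

open scoped Pointwise

variable (A : Matrix ι ι ℤ) (hA : IsGCM A)

lemma imCone_isClosed : IsClosed (imCone A hA) := isClosed_closure

lemma imCone_convex : Convex ℝ (imCone A hA) :=
  (convex_convexHull ℝ _).closure

lemma imCone_zero_mem : (0 : ι → ℝ) ∈ imCone A hA :=
  subset_closure (subset_convexHull ℝ _ (Set.mem_insert 0 _))

variable {A hA}

lemma castR_nsmul (n : ℕ) (β : ι → ℤ) : castR ((n : ℤ) • β) = (n : ℝ) • castR β := by
  funext i
  simp only [castR, Pi.smul_apply, smul_eq_mul]
  push_cast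
  ring

lemma imCone_hull_smul {c : ℝ} (hc : 0 ≤ c) {x : ι → ℝ}
    (hx : x ∈ convexHull ℝ (insert 0 (castR '' posImRoots A hA))) :
    c • x ∈ convexHull ℝ (insert 0 (castR '' posImRoots A hA)) := by
  set G : Set (ι → ℝ) := insert 0 (castR '' posImRoots A hA) with hG
  have h2 : c • G ⊆ convexHull ℝ G := by
    rintro y ⟨z, hz, rfl⟩
    rcases hz with rfl | ⟨β, hβ, rfl⟩
    · simpa using subset_convexHull ℝ G (Set.mem_insert 0 _)
    · set n : ℕ := max 1 ⌈c⌉₊ with hn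
      have hn1 : (1 : ℕ) ≤ n := le_max_left _ _
      have hnR : (0 : ℝ) < n := by
        have : (1:ℝ) ≤ (n:ℝ) := by exact_mod_cast hn1
        linarith
      have hcn : c ≤ (n : ℝ) := by
        refine le_trans (Nat.le_ceil c) ?_
        exact_mod_cast le_max_right 1 ⌈c⌉₊
      have hmem1 : (n : ℝ) • castR β ∈ convexHull ℝ G := by
        rw [← castR_nsmul]
        exact subset_convexHull ℝ G
          (Set.mem_insert_of_mem _ ⟨_, posImRoots_nsmul hβ n hn1, rfl⟩)
      have h0 : (0 : ι → ℝ) ∈ convexHull ℝ G :=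
        subset_convexHull ℝ G (Set.mem_insert 0 _)
      have key := (convex_convexHull ℝ G) hmem1 h0 (div_nonneg hc hnR.le)
        (sub_nonneg.2 (div_le_one_of_le₀ hcn hnR.le)) (by ring)
      have : (c / n) • ((n:ℝ) • castR β) + (1 - c / n) • (0 : ι → ℝ) = c • castR β := by
        rw [smul_zero, add_zero, smul_smul, div_mul_cancel₀ _ hnR.ne']
      rwa [this] at key
  have h1 : c • x ∈ c • convexHull ℝ G := Set.smul_mem_smul_set hx
  rw [← convexHull_smul] at h1
  exact convexHull_min h2 (convex_convexHull ℝ G) h1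

lemma imCone_smul_mem {c : ℝ} (hc : 0 ≤ c) {x : ι → ℝ} (hx : x ∈ imCone A hA) :
    c • x ∈ imCone A hA := by
  set G : Set (ι → ℝ) := insert 0 (castR '' posImRoots A hA) with hG
  have hcont : Continuous fun y : ι → ℝ => c • y := continuous_const_smul c
  have h1 : c • x ∈ closure ((fun y : ι → ℝ => c • y) '' (convexHull ℝ G)) :=
    image_closure_subset_closure_image hcont ⟨x, hx, rfl⟩
  refine closure_mono ?_ h1
  rintro y ⟨z, hz, rfl⟩
  exact imCone_hull_smul hc hz

lemma imCone_nonneg {x : ι → ℝ} (hx : x ∈ imCone A hA) (i : ι) : 0 ≤ x i := by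
  set O : Set (ι → ℝ) := {l | ∀ j, 0 ≤ l j} with hO
  have hOclosed : IsClosed O := by
    have : O = ⋂ j, {l : ι → ℝ | 0 ≤ l j} := by
      ext l; simp [hO, Set.mem_iInter]
    rw [this]
    exact isClosed_iInter fun j => isClosed_le continuous_const (continuous_apply j)
  have hOconv : Convex ℝ O := fun u hu v hv a b ha hb _ => by
    intro j
    simp only [Pi.add_apply, Pi.smul_apply, smul_eq_mul]
    exact add_nonneg (mul_nonneg ha (hu j)) (mul_nonneg hb (hv j))
  have hGO : insert 0 (castR '' posImRoots A hA) ⊆ O := by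
    rintro y (rfl | ⟨β, hβ, rfl⟩)
    · intro j; simp
    · intro j
      have := posImRoots_nonneg hβ j
      simp only [castR]
      exact_mod_cast this
  exact closure_minimal (convexHull_min hGO hOconv) hOclosed hx i

lemma imCone_salient {x : ι → ℝ} (hx : x ∈ imCone A hA) (hx' : -x ∈ imCone A hA) :
    x = 0 := by
  funext i
  have h1 := imCone_nonneg hx i
  have h2 := imCone_nonneg hx' i
  simp only [Pi.neg_apply, neg_nonneg] at h2
  exact le_antisymm h2 h1

lemma imCone_diff_convex : Convex ℝ (imCone A hA \ {0}) := by
  rintro u ⟨huC, hu0⟩ v ⟨hvC, hv0⟩ a b ha hb hab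
  simp only [Set.mem_singleton_iff] at hu0 hv0
  refine ⟨imCone_convex A hA huC hvC ha hb hab, ?_⟩
  simp only [Set.mem_diff, Set.mem_singleton_iff]
  intro h0
  have hau : a • u ∈ imCone A hA := imCone_smul_mem ha huC
  have hbv : b • v ∈ imCone A hA := imCone_smul_mem hb hvC
  have h1' : a • u = -(b • v) := add_eq_zero_iff_eq_neg.1 h0
  have hneg : -(a • u) ∈ imCone A hA := by
    have : -(a • u) = b • v := by rw [h1', neg_neg]
    rw [this]; exact hbv
  have hau0 : a • u = 0 := imCone_salient hau hneg
  rcases smul_eq_zero.1 hau0 with ha0 | hu0'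
  · have hb1 : b = 1 := by linarith
    have : b • v = 0 := by
      have hbv' : b • v = -(a • u) := by rw [h1', neg_neg]
      rw [hbv', hau0, neg_zero]
    rcases smul_eq_zero.1 this with hb0 | hv0'
    · rw [hb1] at hb0; norm_num at hb0
    · exact hv0 hv0'
  · exact hu0 hu0'

/-- The `ℝ`-linear map underlying `pairC Z`. -/
def pairL (Z : ι → ℂ) : (ι → ℝ) →ₗ[ℝ] ℂ where
  toFun l := pairC Z l
  map_add' x y := by
    simp [pairC, Complex.ofReal_add, mul_add, Finset.sum_add_distrib]
  map_smul' c x := by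
    simp only [pairC, Pi.smul_apply, smul_eq_mul, Complex.ofReal_mul, RingHom.id_apply,
      Complex.real_smul, Finset.mul_sum]
    exact Finset.sum_congr rfl fun i _ => by ring

lemma pairL_apply (Z : ι → ℂ) (l : ι → ℝ) : pairL Z l = pairC Z l := rfl

lemma pairC_smul (Z : ι → ℂ) (c : ℝ) (l : ι → ℝ) :
    pairC Z (c • l) = (c : ℂ) * pairC Z l := by
  rw [← pairL_apply, map_smul, pairL_apply, Complex.real_smul]

lemma pairC_continuous (Z : ι → ℂ) : Continuous (pairC Z) := by
  have : Continuous (pairL Z) := (pairL Z).continuous_of_finiteDimensional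
  exact this

end Cone
/-- for `Z ∈ X`, the image `Z(I₀)` is a sector
`{r e^{iπφ} : r > 0, φ₁ ≤ φ ≤ φ₂}` with `φ₂ - φ₁ < 1`. -/
theorem image_imCone_eq_sector (A : Matrix ι ι ℤ) (hA : IsGCM A)
    (hne : (imCone A hA \ {0}).Nonempty) (Z : ι → ℂ) (hZ : Z ∈ Xset A hA) :
    ∃ φ₁ φ₂ : ℝ, φ₁ ≤ φ₂ ∧ φ₂ - φ₁ < 1 ∧
      pairC Z '' (imCone A hA \ {0}) = sector φ₁ φ₂ := by
  classical
  obtain ⟨x₀, hx₀⟩ := hne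
  have hx₀C : x₀ ∈ imCone A hA := hx₀.1
  have hx₀0 : x₀ ≠ 0 := by simpa using hx₀.2
  have hZ' : ∀ x, x ∈ imCone A hA → x ≠ 0 → pairC Z x ≠ 0 := fun x hx hx0 =>
    hZ x ⟨hx, by simpa using hx0⟩
  set T : Set ℂ := pairC Z '' (imCone A hA \ {0}) with hTdef
  -- the compact "sphere section"
  set KS : Set (ι → ℝ) := imCone A hA ∩ Metric.sphere 0 1 with hKSdef
  have hKSc : IsCompact KS := (isCompact_sphere (0 : ι → ℝ) 1).inter_left
    (imCone_isClosed A hA)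
  have hKSne : ∀ x : ι → ℝ, x ∈ KS → x ≠ 0 := by
    intro x hx h0
    have := hx.2
    rw [h0, mem_sphere_iff_norm] at this
    simp at this
  -- the normalization map
  have hnorm : ∀ x : ι → ℝ, x ∈ imCone A hA → x ≠ 0 → (‖x‖⁻¹ • x) ∈ KS := by
    intro x hxC hx0
    have hxn : ‖x‖ ≠ 0 := norm_ne_zero_iff.2 hx0
    constructor
    · exact imCone_smul_mem (inv_nonneg.2 (norm_nonneg x)) hxC
    · rw [mem_sphere_iff_norm, sub_zero, norm_smul, norm_inv, norm_norm,
        inv_mul_cancel₀ hxn]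
  set Y : Set ℂ := pairC Z '' KS with hYdef
  have hYc : IsCompact Y := hKSc.image (pairC_continuous Z)
  have hYne : Y.Nonempty := ⟨_, ⟨‖x₀‖⁻¹ • x₀, hnorm x₀ hx₀C hx₀0, rfl⟩⟩
  have hYT : Y ⊆ T := by
    rintro y ⟨x, hx, rfl⟩
    exact ⟨x, ⟨hx.1, by simpa using hKSne x hx⟩, rfl⟩
  -- representation of elements of T
  have hrep : ∀ z ∈ T, ∃ c : ℝ, 0 < c ∧ ∃ y ∈ Y, z = (c : ℂ) * y := by
    rintro z ⟨x, ⟨hxC, hx0'⟩, rfl⟩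
    have hx0 : x ≠ 0 := by simpa using hx0'
    have hxn : ‖x‖ ≠ 0 := norm_ne_zero_iff.2 hx0
    refine ⟨‖x‖, (norm_pos_iff.2 hx0), pairC Z (‖x‖⁻¹ • x),
      ⟨_, hnorm x hxC hx0, rfl⟩, ?_⟩
    rw [← pairC_smul, smul_smul, mul_inv_cancel₀ hxn, one_smul]
  -- positive scaling invariance of T
  have hTscale : ∀ z ∈ T, ∀ r : ℝ, 0 < r → (r : ℂ) * z ∈ T := by
    rintro z ⟨x, ⟨hxC, hx0'⟩, rfl⟩ r hr
    have hx0 : x ≠ 0 := by simpa using hx0'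
    refine ⟨r • x, ⟨imCone_smul_mem hr.le hxC, ?_⟩, pairC_smul Z r x⟩
    simpa using smul_ne_zero hr.ne' hx0
  -- the affine halfspace
  set H1 : Set (ι → ℝ) := {l | 1 ≤ ∑ i, l i} with hH1def
  have hH1closed : IsClosed H1 :=
    isClosed_le continuous_const (continuous_finset_sum _ fun i _ => continuous_apply i)
  have hH1conv : Convex ℝ H1 := by
    intro u hu v hv a b ha hb hab
    simp only [hH1def, Set.mem_setOf_eq, Pi.add_apply, Pi.smul_apply, smul_eq_mul,
      Finset.sum_add_distrib, ← Finset.mul_sum] at hu hv ⊢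
    nlinarith
  have hKSH1 : KS ⊆ H1 := by
    rintro x ⟨hxC, hxS⟩
    have hxn : ∀ i, 0 ≤ x i := imCone_nonneg hxC
    have h1 : ‖x‖ = 1 := by rwa [mem_sphere_iff_norm, sub_zero] at hxS
    have h2 : ‖x‖ ≤ ∑ i, x i := by
      refine (pi_norm_le_iff_of_nonneg
        (Finset.sum_nonneg fun i _ => hxn i)).2 fun i => ?_
      rw [Real.norm_eq_abs, abs_of_nonneg (hxn i)]
      exact Finset.single_le_sum (fun j _ => hxn j) (Finset.mem_univ i)
    simp only [hH1def, Set.mem_setOf_eq]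
    linarith
  -- the compact convex set D separating 0
  set K₁ : Set (ι → ℝ) := closure (convexHull ℝ KS) with hK₁def
  have hK₁c : IsCompact K₁ :=
    Metric.isCompact_of_isClosed_isBounded isClosed_closure
      ((isBounded_convexHull.2 hKSc.isBounded).closure)
  have hK₁conv : Convex ℝ K₁ := (convex_convexHull ℝ KS).closure
  have hK₁C : K₁ ⊆ imCone A hA :=
    closure_minimal (convexHull_min Set.inter_subset_left (imCone_convex A hA))
      (imCone_isClosed A hA)
  have hK₁H1 : K₁ ⊆ H1 := closure_minimal (convexHull_min hKSH1 hH1conv) hH1closed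
  have hKSK₁ : KS ⊆ K₁ := fun x hx => subset_closure (subset_convexHull ℝ KS hx)
  set D : Set ℂ := pairC Z '' K₁ with hDdef
  have hDc : IsCompact D := hK₁c.image (pairC_continuous Z)
  have hDconv : Convex ℝ D := by
    have := hK₁conv.linear_image (pairL Z)
    exact this
  have h0D : (0 : ℂ) ∉ D := by
    rintro ⟨u, huK₁, hu0⟩
    have huH1 : 1 ≤ ∑ i, u i := hK₁H1 huK₁
    have hune : u ≠ 0 := by
      intro h
      rw [h] at huH1
      simp at huH1
      linarith
    exact hZ' u (hK₁C huK₁) hune hu0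
  obtain ⟨L, u₀, hL0, hLD⟩ :=
    geometric_hahn_banach_point_closed hDconv hDc.isClosed h0D
  rw [map_zero] at hL0
  have hLY : ∀ y ∈ Y, 0 < L y := fun y hy =>
    lt_trans hL0 (hLD y (Set.image_mono (f := pairC Z) hKSK₁ hy))
  -- the rotation vector ω
  set ω : ℂ := (L 1 : ℂ) - (L Complex.I : ℂ) * Complex.I with hωdef
  have hωL : ∀ z : ℂ, (z * ω).re = L z := by
    intro z
    have h1 : L z = z.re * L 1 + z.im * L Complex.I := by
      conv_lhs => rw [← Complex.re_add_im z]
      rw [show ((z.re : ℂ) + (z.im : ℂ) * Complex.I)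
          = z.re • (1 : ℂ) + z.im • Complex.I by simp [Complex.real_smul]]
      rw [map_add, map_smul, map_smul, smul_eq_mul, smul_eq_mul]
    rw [h1, Complex.mul_re]
    simp only [hωdef, Complex.sub_re, Complex.sub_im, Complex.ofReal_re,
      Complex.ofReal_im, Complex.mul_re, Complex.mul_im, Complex.I_re, Complex.I_im]
    ring
  have hTre : ∀ z ∈ T, 0 < (z * ω).re := by
    intro z hz
    obtain ⟨c, hc, y, hyY, rfl⟩ := hrep z hz
    rw [mul_assoc]
    rw [show ((c : ℂ) * (y * ω)).re = c * (y * ω).re by simp]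
    exact mul_pos hc (by rw [hωL]; exact hLY y hyY)
  have hT0 : ∀ z ∈ T, z ≠ 0 := by
    intro z hz h0
    have := hTre z hz
    rw [h0, zero_mul] at this
    simp at this
  have hω0 : ω ≠ 0 := by
    intro h
    obtain ⟨y, hy⟩ := hYne
    have := hTre y (hYT hy)
    rw [h, mul_zero] at this
    simp at this
  -- the phase function
  set g : ℂ → ℝ := fun z => Complex.arg (z * ω) with hgdef
  have hgc : ∀ z : ℂ, 0 < (z * ω).re → ContinuousAt g z := by
    intro z hz
    exact ContinuousAt.comp (g := Complex.arg) (f := fun w : ℂ => w * ω) (x := z)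
      (Complex.continuousAt_arg (Or.inl hz)) ((continuous_mul_right ω).continuousAt)
  have hgT : ContinuousOn g T := fun z hz => (hgc z (hTre z hz)).continuousWithinAt
  have hgY : ContinuousOn g Y := fun y hy =>
    (hgc y (hTre y (hYT hy))).continuousWithinAt
  obtain ⟨y₁, hy₁Y, hy₁min⟩ := hYc.exists_isMinOn hYne hgY
  obtain ⟨y₂, hy₂Y, hy₂max⟩ := hYc.exists_isMaxOn hYne hgY
  have hy₁le : ∀ y ∈ Y, g y₁ ≤ g y := fun y hy => hy₁min hy
  have hy₂ge : ∀ y ∈ Y, g y ≤ g y₂ := fun y hy => hy₂max hy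
  set θ : ℝ := Complex.arg ω with hθdef
  set φ₁ : ℝ := (g y₁ - θ) / Real.pi with hφ₁def
  set φ₂ : ℝ := (g y₂ - θ) / Real.pi with hφ₂def
  have hgy12 : g y₁ ≤ g y₂ := hy₁le y₂ hy₂Y
  have hφle : φ₁ ≤ φ₂ :=
    (div_le_div_iff_of_pos_right Real.pi_pos).2 (by linarith)
  have habs : ∀ z : ℂ, 0 < (z * ω).re → |g z| < Real.pi / 2 := fun z hz =>
    Complex.abs_arg_lt_pi_div_two_iff.2 (Or.inl hz)
  have hφdiff : φ₂ - φ₁ < 1 := by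
    have h1 := habs y₁ (hTre y₁ (hYT hy₁Y))
    have h2 := habs y₂ (hTre y₂ (hYT hy₂Y))
    rw [abs_lt] at h1 h2
    have heq : φ₂ - φ₁ = (g y₂ - g y₁) / Real.pi := by
      rw [hφ₁def, hφ₂def]; ring
    rw [heq, div_lt_one Real.pi_pos]
    linarith
  -- the key pointwise identity
  have hzid : ∀ z : ℂ, 0 < (z * ω).re →
      z = (‖z‖ : ℂ) * Complex.exp ((g z - θ : ℝ) * Complex.I) := by
    intro z hz
    have hz0 : z ≠ 0 := by
      intro h
      rw [h, zero_mul] at hz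
      simp at hz
    have h1 := Complex.norm_mul_exp_arg_mul_I (z * ω)
    have h2 := Complex.norm_mul_exp_arg_mul_I ω
    have hA1 : (‖z * ω‖ : ℂ) ≠ 0 := by
      exact_mod_cast (norm_ne_zero_iff.2 (mul_ne_zero hz0 hω0))
    have hA2 : (‖ω‖ : ℂ) ≠ 0 := by
      exact_mod_cast (norm_ne_zero_iff.2 hω0)
    have e1 : Complex.exp ((g z : ℝ) * Complex.I)
        = z * ω / (‖z * ω‖ : ℂ) := by
      rw [eq_div_iff hA1, mul_comm]
      exact h1
    have e2 : Complex.exp ((θ : ℝ) * Complex.I) = ω / (‖ω‖ : ℂ) := by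
      rw [eq_div_iff hA2, mul_comm]
      exact h2
    have habs' : (‖z * ω‖ : ℂ)
        = (‖z‖ : ℂ) * (‖ω‖ : ℂ) := by
      rw [norm_mul]
      push_cast
      ring
    have hA0 : (‖z‖ : ℂ) ≠ 0 := by
      exact_mod_cast (norm_ne_zero_iff.2 hz0)
    rw [show ((g z - θ : ℝ) : ℂ) = ((g z : ℝ) : ℂ) - ((θ : ℝ) : ℂ) by push_cast; ring,
      sub_mul, Complex.exp_sub, e1, e2, habs']
    field_simp
  -- the two inclusions
  refine ⟨φ₁, φ₂, hφle, hφdiff, ?_⟩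
  ext z
  constructor
  · intro hzT
    have hzre := hTre z hzT
    have hz0 : z ≠ 0 := hT0 z hzT
    obtain ⟨c, hc, y, hyY, hzy⟩ := hrep z hzT
    have hgz : g z = g y := by
      rw [hgdef]
      simp only
      rw [hzy, mul_assoc, Complex.arg_real_mul (y * ω) hc]
    refine ⟨‖z‖, norm_pos_iff.mpr hz0, (g z - θ) / Real.pi, ?_, ?_, ?_⟩
    · rw [hφ₁def]
      exact (div_le_div_iff_of_pos_right Real.pi_pos).2 (by have := hy₁le y hyY; linarith [hgz])
    · rw [hφ₂def]
      exact (div_le_div_iff_of_pos_right Real.pi_pos).2 (by have := hy₂ge y hyY; linarith [hgz])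
    · have hπne : (Real.pi : ℂ) ≠ 0 := by exact_mod_cast Real.pi_ne_zero
      have hπ : (Real.pi : ℂ) * ((g z - θ) / Real.pi : ℝ) = ((g z - θ : ℝ) : ℂ) := by
        push_cast
        field_simp
      rw [hπ]
      exact hzid z hzre
  · rintro ⟨r, hr, φ, hφ1, hφ2, rfl⟩
    set τ : ℝ := Real.pi * φ + θ with hτdef
    have hπφ₁ : Real.pi * φ₁ = g y₁ - θ := by
      rw [hφ₁def]; field_simp
    have hπφ₂ : Real.pi * φ₂ = g y₂ - θ := by
      rw [hφ₂def]; field_simp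
    have hτ1 : g y₁ ≤ τ := by
      have := mul_le_mul_of_nonneg_left hφ1 Real.pi_pos.le
      rw [hτdef]; linarith [hπφ₁]
    have hτ2 : τ ≤ g y₂ := by
      have := mul_le_mul_of_nonneg_left hφ2 Real.pi_pos.le
      rw [hτdef]; linarith [hπφ₂]
    have hTpre : IsPreconnected T := by
      have hpc : IsPathConnected (imCone A hA \ {0}) :=
        (imCone_diff_convex (A := A) (hA := hA)).isPathConnected ⟨x₀, hx₀⟩
      exact (hpc.image (pairC_continuous Z)).isConnected.isPreconnected
    have hIVT := hTpre.intermediate_value (hYT hy₁Y) (hYT hy₂Y) hgT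
    obtain ⟨z', hz'T, hgz'⟩ := hIVT ⟨hτ1, hτ2⟩
    have hz're := hTre z' hz'T
    have habs'pos : 0 < ‖z'‖ := norm_pos_iff.mpr (hT0 z' hz'T)
    have hid := hzid z' hz're
    rw [hgz'] at hid
    have hτθ : (τ - θ : ℝ) = Real.pi * φ := by rw [hτdef]; ring
    rw [hτθ] at hid
    have hmem := hTscale z' hz'T (r / ‖z'‖) (div_pos hr habs'pos)
    have hA0' : (‖z'‖ : ℂ) ≠ 0 := by exact_mod_cast habs'pos.ne'
    have heq : ((r / ‖z'‖ : ℝ) : ℂ) * z'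
        = (r : ℂ) * Complex.exp ((Real.pi * φ : ℝ) * Complex.I) := by
      nth_rewrite 2 [hid]
      rw [← mul_assoc]
      congr 1
      push_cast
      exact div_mul_cancel₀ _ hA0'
    rw [heq] at hmem
    have hcast : ((Real.pi * φ : ℝ) : ℂ) = (Real.pi : ℂ) * (φ : ℂ) := by push_cast; ring
    rw [hcast] at hmem
    exact hmem

end KacMoodyStab
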